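/- Let G be a finite split graph, i.e., its vertex set can be partitioned into a clique C and an independent set Z. Then n − |𝒞| = ω − 1, where n is the number of vertices, 𝒞 is the set of maximal cliques of G, and ω is the maximum clique size. -/

import Mathlib

/-- A maximal clique of a simple graph (as a vertex set). -/
def MaxClique {V : Type*} (G : SimpleGraph V) (C : Set V) : Prop :=
  G.IsClique C ∧ ∀ C' : Set V, G.IsClique C' → C ⊆ C' → C = C'

/-- For a finite split graph (vertices partitioned into a clique C and an independent
set Z), n − |𝒞| = ω − 1, where n is the number of vertices, 𝒞 the set of maximal
cliques and ω the maximum clique size. -/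
theorem stmt18 {V : Type*} [Fintype V] (G : SimpleGraph V)
    (C Z : Set V) (hunion : C ∪ Z = Set.univ) (hdisj : C ∩ Z = ∅)
    (hC : G.IsClique C) (hZ : ∀ u ∈ Z, ∀ v ∈ Z, ¬ G.Adj u v)
    (ω : ℕ) (hω : IsGreatest {t : ℕ | ∃ s : Finset V, G.IsNClique t s} ω) :
    Fintype.card V - {K : Set V | MaxClique G K}.ncard = ω - 1 := by
  classical
  have hCfin : C.Finite := Set.toFinite C
  have hZfin : Z.Finite := Set.toFinite Z
  set f : V → Set V := fun z => insert z {c | c ∈ C ∧ G.Adj z c} with hf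
  have hZC : ∀ {v}, v ∈ Z → v ∉ C := by
    intro v hv hc
    have : v ∈ C ∩ Z := ⟨hc, hv⟩
    rw [hdisj] at this; exact this
  have hmem : ∀ v : V, v ∈ C ∨ v ∈ Z := by
    intro v
    have : v ∈ C ∪ Z := hunion ▸ Set.mem_univ v
    exact this
  -- f z is a clique
  have hfclique : ∀ z ∈ Z, G.IsClique (f z) := by
    intro z hz a ha b hb hab
    simp only [hf, Set.mem_insert_iff, Set.mem_setOf_eq] at ha hb
    rcases ha with rfl | ⟨haC, haAdj⟩
    · rcases hb with rfl | ⟨hbC, hbAdj⟩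
      · exact absurd rfl hab
      · exact hbAdj
    · rcases hb with rfl | ⟨hbC, hbAdj⟩
      · exact haAdj.symm
      · exact hC haC hbC hab
  have hzmemf : ∀ z, z ∈ f z := fun z => Set.mem_insert z _
  -- f z is maximal
  have hfmax : ∀ z ∈ Z, MaxClique G (f z) := by
    intro z hz
    refine ⟨hfclique z hz, fun C' hC' hsub => Set.Subset.antisymm hsub fun w hw => ?_⟩
    by_cases hwz : w = z
    · subst hwz; exact hzmemf w
    · have hadj : G.Adj z w := hC' (hsub (hzmemf z)) hw (fun h => hwz h.symm)
      have hwC : w ∈ C := by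
        rcases hmem w with h | h
        · exact h
        · exact absurd hadj (hZ z hz w h)
      exact Set.mem_insert_of_mem _ ⟨hwC, hadj⟩
  -- characterization of maximal cliques
  have hchar : ∀ K, MaxClique G K → (∃ z ∈ Z, K = f z) ∨ K = C := by
    rintro K ⟨hKcl, hKmax⟩
    by_cases hKZ : ∃ z, z ∈ K ∧ z ∈ Z
    · obtain ⟨z, hzK, hzZ⟩ := hKZ
      left
      refine ⟨z, hzZ, hKmax (f z) (hfclique z hzZ) fun w hw => ?_⟩
      by_cases hwz : w = z
      · subst hwz; exact hzmemf w
      · have hadj : G.Adj z w := hKcl hzK hw (fun h => hwz h.symm)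
        have hwC : w ∈ C := by
          rcases hmem w with h | h
          · exact h
          · exact absurd hadj (hZ z hzZ w h)
        exact Set.mem_insert_of_mem _ ⟨hwC, hadj⟩
    · right
      push_neg at hKZ
      have hKC : K ⊆ C := fun w hw => (hmem w).resolve_right (hKZ w hw)
      exact hKmax C hC hKC
  -- injectivity
  have hinj : Set.InjOn f Z := by
    intro z1 h1 z2 h2 heq
    have : z1 ∈ f z2 := heq ▸ hzmemf z1
    rcases this with h | ⟨hc, _⟩
    · exact h
    · exact absurd hc (hZC h1)
  have hfneC : ∀ z ∈ Z, f z ≠ C := by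
    intro z hz h
    exact hZC hz (h ▸ hzmemf z)
  -- total count
  have hcard : Fintype.card V = C.ncard + Z.ncard := by
    rw [← Nat.card_eq_fintype_card, ← Set.ncard_univ, ← hunion,
      Set.ncard_union_eq (Set.disjoint_iff_inter_eq_empty.mpr hdisj) hCfin hZfin]
  -- clique intersect Z is subsingleton
  have hssub : ∀ s : Finset V, G.IsClique (↑s : Set V) → ((↑s : Set V) ∩ Z).ncard ≤ 1 := by
    intro s hs
    rw [Set.ncard_le_one_iff_eq]
    by_cases h : ((↑s : Set V) ∩ Z) = ∅
    · left; exact h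
    · right
      obtain ⟨a, haS, haZ⟩ := Set.nonempty_iff_ne_empty.mpr h
      refine ⟨a, Set.eq_singleton_iff_unique_mem.mpr ⟨⟨haS, haZ⟩, fun b ⟨hbS, hbZ⟩ => ?_⟩⟩
      by_contra hba
      exact hZ b hbZ a haZ (hs hbS haS hba)
  have hsplit : ∀ s : Finset V, s.card ≤ ((↑s : Set V) ∩ C).ncard + ((↑s : Set V) ∩ Z).ncard := by
    intro s
    have : (↑s : Set V) = ((↑s : Set V) ∩ C) ∪ ((↑s : Set V) ∩ Z) := by
      rw [← Set.inter_union_distrib_left, hunion, Set.inter_univ]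
    calc s.card = (↑s : Set V).ncard := (Set.ncard_coe_finset s).symm
      _ = (((↑s : Set V) ∩ C) ∪ ((↑s : Set V) ∩ Z)).ncard := by rw [← this]
      _ ≤ _ := Set.ncard_union_le _ _
  by_cases hdom : ∃ z ∈ Z, ∀ c ∈ C, G.Adj z c
  · -- Case 1
    obtain ⟨z0, hz0Z, hz0dom⟩ := hdom
    -- ω = C.ncard + 1
    have hfz0 : f z0 = insert z0 C := by
      simp only [hf]
      congr 1
      ext c
      simp only [Set.mem_setOf_eq, and_iff_left_iff_imp]
      exact hz0dom c
    have homega : ω = C.ncard + 1 := by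
      have hub : ∀ t ∈ {t : ℕ | ∃ s : Finset V, G.IsNClique t s}, t ≤ C.ncard + 1 := by
        rintro t ⟨s, hscl, hscard⟩
        rw [← hscard]
        calc s.card ≤ ((↑s : Set V) ∩ C).ncard + ((↑s : Set V) ∩ Z).ncard := hsplit s
          _ ≤ C.ncard + 1 := add_le_add
              (Set.ncard_le_ncard (Set.inter_subset_right) hCfin) (hssub s hscl)
      have hmemω : C.ncard + 1 ∈ {t : ℕ | ∃ s : Finset V, G.IsNClique t s} := by
        refine ⟨insert z0 hCfin.toFinset, ?_, ?_⟩
        · have : ((insert z0 hCfin.toFinset : Finset V) : Set V) = f z0 := by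
            rw [Finset.coe_insert, Set.Finite.coe_toFinset, hfz0]
          rw [this]; exact hfclique z0 hz0Z
        · rw [Finset.card_insert_of_notMem (by simpa using hZC hz0Z),
            Set.Finite.card_toFinset]
          simp [Set.ncard_eq_toFinset_card']
      exact le_antisymm (hub ω hω.1) (hω.2 hmemω)
    -- 𝒞 = f '' Z
    have hset : {K : Set V | MaxClique G K} = f '' Z := by
      ext K
      constructor
      · intro hK
        rcases hchar K hK with ⟨z, hz, rfl⟩ | rfl
        · exact ⟨z, hz, rfl⟩
        · exfalso
          have := hK.2 (f z0) (hfclique z0 hz0Z)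
            (by rw [hfz0]; exact Set.subset_insert _ _)
          exact hfneC z0 hz0Z this.symm
      · rintro ⟨z, hz, rfl⟩
        exact hfmax z hz
    rw [hset, Set.ncard_image_of_injOn hinj, homega, hcard]
    omega
  · -- Case 2
    push_neg at hdom
    have hCmax : MaxClique G C := by
      refine ⟨hC, fun C' hC' hsub => Set.Subset.antisymm hsub fun w hw => ?_⟩
      rcases hmem w with h | h
      · exact h
      · exfalso
        obtain ⟨c, hc, hnadj⟩ := hdom w h
        refine hnadj (hC' hw (hsub hc) ?_)
        intro heq
        exact hZC h (heq ▸ hc)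
    have homega : ω = C.ncard := by
      have hub : ∀ t ∈ {t : ℕ | ∃ s : Finset V, G.IsNClique t s}, t ≤ C.ncard := by
        rintro t ⟨s, hscl, hscard⟩
        rw [← hscard]
        by_cases hsZ : ((↑s : Set V) ∩ Z) = ∅
        · have hsC : (↑s : Set V) ⊆ C := by
            intro w hw
            rcases hmem w with h | h
            · exact h
            · exact absurd (Set.eq_empty_iff_forall_notMem.mp hsZ w ⟨hw, h⟩) (by simp)
          calc s.card = (↑s : Set V).ncard := (Set.ncard_coe_finset s).symm
            _ ≤ C.ncard := Set.ncard_le_ncard hsC hCfin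
        · obtain ⟨z, hzS, hzZ⟩ := Set.nonempty_iff_ne_empty.mpr hsZ
          obtain ⟨c, hcC, hnadj⟩ := hdom z hzZ
          have hcS : c ∉ (↑s : Set V) := by
            intro hcS
            refine hnadj (hscl hzS hcS ?_)
            intro heq
            exact hZC hzZ (by rw [heq]; exact hcC)
          have h1 : ((↑s : Set V) ∩ C) ⊆ C \ {c} := by
            rintro w ⟨hwS, hwC⟩
            exact ⟨hwC, fun heq => hcS (heq ▸ hwS)⟩
          have h2 : ((↑s : Set V) ∩ C).ncard ≤ C.ncard - 1 := by
            calc ((↑s : Set V) ∩ C).ncard ≤ (C \ {c}).ncard :=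
                Set.ncard_le_ncard h1 (hCfin.diff)
              _ = C.ncard - 1 := Set.ncard_diff_singleton_of_mem hcC
          have h3 : 1 ≤ C.ncard := (Set.ncard_pos hCfin).mpr ⟨c, hcC⟩
          have := hsplit s
          have := hssub s hscl
          omega
      have hmemω : C.ncard ∈ {t : ℕ | ∃ s : Finset V, G.IsNClique t s} := by
        refine ⟨hCfin.toFinset, ?_, ?_⟩
        · rw [Set.Finite.coe_toFinset]; exact hC
        · rw [Set.Finite.card_toFinset]; simp [Set.ncard_eq_toFinset_card']
      exact le_antisymm (hub ω hω.1) (hω.2 hmemω)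
    have hset : {K : Set V | MaxClique G K} = insert C (f '' Z) := by
      ext K
      constructor
      · intro hK
        rcases hchar K hK with ⟨z, hz, rfl⟩ | rfl
        · exact Set.mem_insert_of_mem _ ⟨z, hz, rfl⟩
        · exact Set.mem_insert _ _
      · rintro (rfl | ⟨z, hz, rfl⟩)
        · exact hCmax
        · exact hfmax z hz
    have hCnotmem : C ∉ f '' Z := by
      rintro ⟨z, hz, heq⟩
      exact hfneC z hz heq
    rw [hset, Set.ncard_insert_of_notMem hCnotmem ((hZfin.image f)),
      Set.ncard_image_of_injOn hinj, homega, hcard]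
    omega
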